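/- Fix an integer m ≥ 1. There are m passengers and m edges labeled 1, …, m. Each passenger may take the full option (which uses all m edges and has value 1), a single-edge option e for any edge e (which uses only edge e and has value 1/2), or remain unassigned (value 0); a joint assignment is feasible if each edge is used by at most one passenger in total. Let OPT_restricted be the maximum total value over feasible assignments in which every assigned passenger takes the full option (her maximum-value option), and let OPT_general be the maximum total value over all feasible assignments. Then OPT_restricted = 1 and OPT_general ≥ m/2; in particular the ratio OPT_general / OPT_restricted is at least m/2, so the trip-optimality gap is unbounded as m grows. -/
import Mathlib


/-- A trip option for the instance of Proposition A.1: the full route (all `m` edges),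
a single-edge sub-route, or no assignment. -/
inductive TripOpt (m : ℕ) where
  | full : TripOpt m
  | single : Fin m → TripOpt m
  | unassigned : TripOpt m
deriving DecidableEq

/-- Edges used by a trip option. -/
def TripOpt.uses {m : ℕ} : TripOpt m → Finset (Fin m)
  | .full => Finset.univ
  | .single e => {e}
  | .unassigned => ∅

/-- Value of a trip option: the full route is worth `1`, a single edge `1/2`, none `0`. -/
noncomputable def TripOpt.val {m : ℕ} : TripOpt m → ℝ
  | .full => 1
  | .single _ => 1 / 2
  | .unassigned => 0

/-- A joint assignment of the `m` passengers is feasible if each edge is used by at most one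
passenger (bus capacity 1, frequency 1). -/
def tripFeasible {m : ℕ} (a : Fin m → TripOpt m) : Prop :=
  ∀ e : Fin m, (Finset.univ.filter (fun p => e ∈ (a p).uses)).card ≤ 1

/-- Total value of a joint assignment. -/
noncomputable def tripTotal {m : ℕ} (a : Fin m → TripOpt m) : ℝ := ∑ p, (a p).val

/-- Proposition A.1 (unbounded trip-optimality gap): with `m` passengers on a single line of
`m` edges, if every assigned passenger must take her maximum-value (full) option the optimal
welfare is `1`, whereas allowing arbitrary sub-routes achieves at least `m/2`; hence the ratio
is at least `m/2`. -/
theorem stmt10 (m : ℕ) (hm : 1 ≤ m) (OPTr OPTg : ℝ)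
    (hOPTr : IsGreatest
      {y | ∃ a : Fin m → TripOpt m, tripFeasible a ∧
        (∀ p, a p = .full ∨ a p = .unassigned) ∧ y = tripTotal a} OPTr)
    (hOPTg : IsGreatest
      {y | ∃ a : Fin m → TripOpt m, tripFeasible a ∧ y = tripTotal a} OPTg) :
    OPTr = 1 ∧ (m : ℝ) / 2 ≤ OPTg ∧ (m : ℝ) / 2 ≤ OPTg / OPTr := by
  have e0 : Fin m := ⟨0, hm⟩
  -- witness for restricted: passenger 0 full, rest unassigned
  have hwr : (1 : ℝ) ∈ {y | ∃ a : Fin m → TripOpt m, tripFeasible a ∧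
        (∀ p, a p = .full ∨ a p = .unassigned) ∧ y = tripTotal a} := by
    refine ⟨fun p => if p = e0 then .full else .unassigned, ?_, ?_, ?_⟩
    · intro e
      refine Finset.card_le_one.2 ?_
      intro p hp q hq
      simp only [Finset.mem_filter] at hp hq
      by_contra hne
      rcases hp with ⟨-, hp⟩
      rcases hq with ⟨-, hq⟩
      by_cases h1 : p = e0 <;> by_cases h2 : q = e0 <;>
        simp [h1, h2, TripOpt.uses] at hp hq ⊢
      · exact hne (h1.trans h2.symm)
    · intro p; by_cases h : p = e0 <;> simp [h]
    · simp only [tripTotal]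
      rw [Finset.sum_eq_single e0]
      · simp [TripOpt.val]
      · intro b _ hb; simp [hb, TripOpt.val]
      · simp
  -- upper bound 1 on restricted
  have hub : OPTr ≤ 1 := by
    obtain ⟨a, hfeas, hres, hval⟩ := hOPTr.1
    subst hval
    have key : (Finset.univ.filter (fun p => a p = TripOpt.full)).card ≤ 1 := by
      refine le_trans (Finset.card_le_card ?_) (hfeas e0)
      intro p hp
      simp only [Finset.mem_filter] at hp ⊢
      exact ⟨hp.1, by simp [hp.2, TripOpt.uses]⟩
    have : tripTotal a = (Finset.univ.filter (fun p => a p = TripOpt.full)).card := by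
      unfold tripTotal
      rw [Finset.card_filter]
      push_cast
      refine Finset.sum_congr rfl fun p _ => ?_
      rcases hres p with h | h <;> simp [h, TripOpt.val]
    rw [this]
    exact_mod_cast key
  have hOPTr1 : OPTr = 1 := le_antisymm hub (hOPTr.2 hwr)
  -- witness for general: each passenger p takes single p
  have hwg : (m : ℝ) / 2 ∈ {y | ∃ a : Fin m → TripOpt m, tripFeasible a ∧ y = tripTotal a} := by
    refine ⟨fun p => .single p, ?_, ?_⟩
    · intro e
      refine Finset.card_le_one.2 ?_
      intro p hp q hq
      simp only [Finset.mem_filter, TripOpt.uses, Finset.mem_singleton] at hp hq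
      rw [← hp.2, ← hq.2]
    · simp [tripTotal, TripOpt.val, Finset.sum_const, div_eq_mul_inv]
  have hge : (m : ℝ) / 2 ≤ OPTg := hOPTg.2 hwg
  exact ⟨hOPTr1, hge, by rw [hOPTr1, div_one]; exact hge⟩
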